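/- arXiv:1905.08515 — 4 statements merged into one kernel-verified Lean document; each statement's English description precedes it below -/
import Mathlib

section
/- Let d ≥ 1, let E be a nonempty finite index set, let S ≥ 1 and M > 0 be reals, and for each e ∈ E let ψ_e : ℝ^d → ℝ be measurable with |ψ_e(x)| ≤ M for all x and ψ_e(x) = 0 for x ∉ [0,S]^d. For j ∈ ℕ, k ∈ ℤ^d, e ∈ E define ψ_{j,k,e}(x) := 2^{jd/2} ψ_e(2^j x − k). Let A, B ≥ 0 and let (c_{j,k,e})_{j ∈ ℕ, k ∈ ℤ^d, e ∈ E} be real coefficients, finitely many nonzero at each level j, satisfying for every j ∈ ℕ: sup_{k,e} |c_{j,k,e}| ≤ 2^{−jd/2} A and Σ_{k,e} |c_{j,k,e}| ≤ 2^{j(d/2 − 1)} B. Then for every q with 2 ≤ q ≤ 3 there exists a constant C > 0, depending only on d, q, S, M and #E, such that for all natural numbers J < J': ‖ Σ_{j = J+1}^{J'} Σ_{k ∈ ℤ^d} Σ_{e ∈ E} c_{j,k,e} ψ_{j,k,e} ‖_{L^q(ℝ^d)} ≤ C · 2^{−J/q} · A^{1 − 1/q} · B^{1/q}. -/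
open MeasureTheory
open scoped ENNReal

section WaveletAux

/-- Pointwise sup bound for a single level of the wavelet expansion. -/
private lemma wavelet_aux_sup
    (d : ℕ) {E : Type*} [Fintype E] [Nonempty E]
    (S M : ℝ) (hS : 1 ≤ S) (hM : 0 < M)
    (ψ : E → (Fin d → ℝ) → ℝ)
    (hbd : ∀ e x, |ψ e x| ≤ M)
    (hsupp : ∀ e x, x ∉ Set.Icc (0 : Fin d → ℝ) (fun _ => S) → ψ e x = 0)
    (A : ℝ) (hA : 0 ≤ A)
    (c : ℕ → ((Fin d → ℤ) × E) →₀ ℝ)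
    (hcsup : ∀ (j : ℕ) (p : (Fin d → ℤ) × E), |c j p| ≤ (2 : ℝ) ^ (-((j : ℝ) * d) / 2) * A)
    (j : ℕ) (x : Fin d → ℝ) :
    |∑ p ∈ (c j).support,
        c j p * ((2 : ℝ) ^ ((j : ℝ) * d / 2) * ψ p.2 (fun i => 2 ^ j * x i - p.1 i))|
      ≤ ((S+1)^d * (Fintype.card E) * M) * A := by
  classical
  set w : ℝ := (2 : ℝ) ^ ((j : ℝ) * d / 2) with hw
  have hw0 : 0 < w := Real.rpow_pos_of_pos two_pos _
  set g : (Fin d → ℤ) → (Fin d → ℝ) := fun k => fun i => 2 ^ j * x i - (k i : ℝ) with hg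
  have step1 : |∑ p ∈ (c j).support, c j p * (w * ψ p.2 (g p.1))|
      ≤ A * ∑ p ∈ (c j).support, |ψ p.2 (g p.1)| := by
    refine (Finset.abs_sum_le_sum_abs _ _).trans ?_
    rw [Finset.mul_sum]
    refine Finset.sum_le_sum fun p _ => ?_
    rw [abs_mul, abs_mul, abs_of_pos hw0]
    have h1 : |c j p| * w ≤ A := by
      have := hcsup j p
      have hww : (2 : ℝ) ^ (-((j : ℝ) * d) / 2) * w = 1 := by
        rw [hw, ← Real.rpow_add two_pos,
          show -((j:ℝ) * d) / 2 + (j:ℝ) * d / 2 = 0 by ring, Real.rpow_zero]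
      calc |c j p| * w ≤ ((2 : ℝ) ^ (-((j : ℝ) * d) / 2) * A) * w := by
            exact mul_le_mul_of_nonneg_right this hw0.le
        _ = A * ((2 : ℝ) ^ (-((j : ℝ) * d) / 2) * w) := by ring
        _ = A := by rw [hww, mul_one]
    calc |c j p| * (w * |ψ p.2 (g p.1)|) = (|c j p| * w) * |ψ p.2 (g p.1)| := by ring
      _ ≤ A * |ψ p.2 (g p.1)| := mul_le_mul_of_nonneg_right h1 (abs_nonneg _)
  -- counting
  set T : Finset ((Fin d → ℤ) × E) :=
    (Fintype.piFinset fun i => Finset.Icc ⌈(2:ℝ) ^ j * x i - S⌉ ⌊(2:ℝ) ^ j * x i⌋) ×ˢ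
      Finset.univ with hT
  have hzero : ∀ p ∈ (c j).support, p ∉ T → |ψ p.2 (g p.1)| = 0 := by
    intro p _ hpT
    rw [abs_eq_zero]
    apply hsupp
    intro hmem
    rw [Set.mem_Icc] at hmem
    obtain ⟨h0, hSle⟩ := hmem
    apply hpT
    rw [hT, Finset.mem_product]
    refine ⟨?_, Finset.mem_univ _⟩
    rw [Fintype.mem_piFinset]
    intro i
    rw [Finset.mem_Icc]
    have h0i := h0 i
    have hSi := hSle i
    simp only [Pi.zero_apply] at h0i
    constructor
    · rw [Int.ceil_le]
      simp only [hg] at hSi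
      linarith
    · rw [Int.le_floor]
      simp only [hg] at h0i
      linarith
  have step2 : ∑ p ∈ (c j).support, |ψ p.2 (g p.1)| ≤ (S+1)^d * (Fintype.card E) * M := by
    have heq : ∑ p ∈ (c j).support, |ψ p.2 (g p.1)|
        = ∑ p ∈ (c j).support ∩ T, |ψ p.2 (g p.1)| := by
      refine (Finset.sum_subset Finset.inter_subset_left ?_).symm
      intro p hp hpT
      exact hzero p hp (fun h => hpT (Finset.mem_inter.mpr ⟨hp, h⟩))
    rw [heq]
    have hcard : (((c j).support ∩ T).card : ℝ) ≤ (S+1)^d * (Fintype.card E) := by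
      have h1 : ((c j).support ∩ T).card ≤ T.card :=
        Finset.card_le_card Finset.inter_subset_right
      have h2 : (T.card : ℝ) ≤ (S+1)^d * (Fintype.card E) := by
        rw [hT, Finset.card_product, Finset.card_univ, Fintype.card_piFinset]
        push_cast
        gcongr
        calc (∏ i : Fin d, ((Finset.Icc ⌈(2:ℝ)^j * x i - S⌉ ⌊(2:ℝ)^j * x i⌋).card : ℝ))
            ≤ ∏ _i : Fin d, (S+1) := ?_
          _ = (S+1)^d := by rw [Finset.prod_const, Finset.card_univ, Fintype.card_fin]
        refine Finset.prod_le_prod (fun i _ => by positivity) (fun i _ => ?_)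
        rcases le_or_gt ⌈(2:ℝ) ^ j * x i - S⌉ ⌊(2:ℝ) ^ j * x i⌋ with h | h
        · rw [Int.card_Icc]
          have hnn : (0:ℤ) ≤ ⌊(2:ℝ)^j * x i⌋ + 1 - ⌈(2:ℝ)^j * x i - S⌉ := by omega
          have h5 := Int.toNat_of_nonneg hnn
          have hcast : ((⌊(2:ℝ)^j * x i⌋ + 1 - ⌈(2:ℝ)^j * x i - S⌉).toNat : ℝ)
              = ((⌊(2:ℝ)^j * x i⌋ : ℝ) + 1 - (⌈(2:ℝ)^j * x i - S⌉ : ℝ)) := by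
            exact_mod_cast congrArg (fun z : ℤ => (z : ℝ)) h5
          rw [hcast]
          have h3 : (⌊(2:ℝ)^j * x i⌋ : ℝ) ≤ (2:ℝ)^j * x i := Int.floor_le _
          have h4 : (2:ℝ)^j * x i - S ≤ (⌈(2:ℝ)^j * x i - S⌉ : ℝ) := Int.le_ceil _
          linarith
        · rw [Finset.Icc_eq_empty (by omega)]
          simp
          linarith
      calc (((c j).support ∩ T).card : ℝ) ≤ (T.card : ℝ) := by exact_mod_cast h1
        _ ≤ _ := h2
    calc ∑ p ∈ (c j).support ∩ T, |ψ p.2 (g p.1)|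
        ≤ ∑ _p ∈ (c j).support ∩ T, M := Finset.sum_le_sum fun p _ => hbd _ _
      _ = (((c j).support ∩ T).card : ℝ) * M := by rw [Finset.sum_const, nsmul_eq_mul]
      _ ≤ (S+1)^d * (Fintype.card E) * M := mul_le_mul_of_nonneg_right hcard hM.le
  calc |∑ p ∈ (c j).support, c j p * (w * ψ p.2 (g p.1))|
      ≤ A * ∑ p ∈ (c j).support, |ψ p.2 (g p.1)| := step1
    _ ≤ A * ((S+1)^d * (Fintype.card E) * M) := mul_le_mul_of_nonneg_left step2 hA
    _ = ((S+1)^d * (Fintype.card E) * M) * A := by ring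

/-- L¹ bound for a single level of the wavelet expansion. -/
private lemma wavelet_aux_l1
    (d : ℕ) {E : Type*} [Fintype E] [Nonempty E]
    (S M : ℝ) (hS : 1 ≤ S) (hM : 0 < M)
    (ψ : E → (Fin d → ℝ) → ℝ)
    (hmeas : ∀ e, Measurable (ψ e))
    (hbd : ∀ e x, |ψ e x| ≤ M)
    (hsupp : ∀ e x, x ∉ Set.Icc (0 : Fin d → ℝ) (fun _ => S) → ψ e x = 0)
    (B : ℝ)
    (c : ℕ → ((Fin d → ℤ) × E) →₀ ℝ)
    (hcl1 : ∀ j : ℕ, ∑ p ∈ (c j).support, |c j p| ≤ (2 : ℝ) ^ ((j : ℝ) * ((d : ℝ) / 2 - 1)) * B)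
    (j : ℕ) :
    ∫⁻ x : Fin d → ℝ, (‖∑ p ∈ (c j).support,
        c j p * ((2 : ℝ) ^ ((j : ℝ) * d / 2) * ψ p.2 (fun i => 2 ^ j * x i - p.1 i))‖₊ : ℝ≥0∞)
      ≤ ENNReal.ofReal (M * S^d * B * (2:ℝ) ^ (-(j:ℝ))) := by
  classical
  set w : ℝ := (2 : ℝ) ^ ((j : ℝ) * d / 2) with hw
  have hw0 : 0 < w := Real.rpow_pos_of_pos two_pos _
  have h2j : (0:ℝ) < 2 ^ j := by positivity
  set h : ((Fin d → ℤ) × E) → (Fin d → ℝ) → ℝ≥0∞ := fun p x =>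
    ENNReal.ofReal (|c j p| * (w * |ψ p.2 (fun i => 2 ^ j * x i - p.1 i)|)) with hh
  have hhmeas : ∀ p, Measurable (h p) := by
    intro p
    apply ENNReal.measurable_ofReal.comp
    apply Measurable.const_mul
    apply Measurable.const_mul
    apply Measurable.abs
    exact (hmeas p.2).comp (by
      apply measurable_pi_lambda
      intro i
      exact ((measurable_pi_apply i).const_mul _).sub_const _)
  have hpt : ∀ x, (‖∑ p ∈ (c j).support,
      c j p * (w * ψ p.2 (fun i => 2 ^ j * x i - p.1 i))‖₊ : ℝ≥0∞)
      ≤ ∑ p ∈ (c j).support, h p x := by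
    intro x
    rw [← enorm_eq_nnnorm, ← ofReal_norm, Real.norm_eq_abs]
    calc ENNReal.ofReal |∑ p ∈ (c j).support,
          c j p * (w * ψ p.2 (fun i => 2 ^ j * x i - p.1 i))|
        ≤ ENNReal.ofReal (∑ p ∈ (c j).support,
            |c j p| * (w * |ψ p.2 (fun i => 2 ^ j * x i - p.1 i)|)) := by
          apply ENNReal.ofReal_le_ofReal
          refine (Finset.abs_sum_le_sum_abs _ _).trans (Finset.sum_le_sum fun p _ => ?_)
          rw [abs_mul, abs_mul, abs_of_pos hw0]
      _ = ∑ p ∈ (c j).support, h p x := by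
          rw [ENNReal.ofReal_sum_of_nonneg]
          intro p _
          positivity
  have hterm : ∀ p : (Fin d → ℤ) × E,
      ∫⁻ x, h p x ≤ ENNReal.ofReal (|c j p| * (w * M) * (S / 2 ^ j) ^ d) := by
    intro p
    set lo : Fin d → ℝ := fun i => (p.1 i : ℝ) / 2 ^ j with hlo
    set hi : Fin d → ℝ := fun i => ((p.1 i : ℝ) + S) / 2 ^ j with hhi
    have hind : ∀ x, h p x ≤ (Set.Icc lo hi).indicator
        (fun _ => ENNReal.ofReal (|c j p| * (w * M))) x := by
      intro x
      by_cases hx : x ∈ Set.Icc lo hi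
      · rw [Set.indicator_of_mem hx]
        apply ENNReal.ofReal_le_ofReal
        have := hbd p.2 (fun i => 2 ^ j * x i - p.1 i)
        have h1 : w * |ψ p.2 (fun i => 2 ^ j * x i - p.1 i)| ≤ w * M :=
          mul_le_mul_of_nonneg_left this hw0.le
        exact mul_le_mul_of_nonneg_left h1 (abs_nonneg _)
      · rw [Set.indicator_of_notMem hx]
        have : ψ p.2 (fun i => 2 ^ j * x i - p.1 i) = 0 := by
          apply hsupp
          intro hmem
          apply hx
          rw [Set.mem_Icc] at hmem ⊢
          obtain ⟨h0, hSle⟩ := hmem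
          constructor <;> intro i
          · have := h0 i
            simp only [Pi.zero_apply] at this
            rw [hlo, div_le_iff₀ h2j]
            linarith [this]
          · have := hSle i
            rw [hhi, le_div_iff₀ h2j]
            have h6 : 2 ^ j * x i - (p.1 i : ℝ) ≤ S := by simpa using this
            linarith
        rw [hh]
        simp [this]
    calc ∫⁻ x, h p x ≤ ∫⁻ x, (Set.Icc lo hi).indicator
          (fun _ => ENNReal.ofReal (|c j p| * (w * M))) x := lintegral_mono hind
      _ = ENNReal.ofReal (|c j p| * (w * M)) * volume (Set.Icc lo hi) := by
          rw [lintegral_indicator measurableSet_Icc, setLIntegral_const]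
      _ = ENNReal.ofReal (|c j p| * (w * M)) * ENNReal.ofReal ((S / 2 ^ j) ^ d) := by
          rw [Real.volume_Icc_pi]
          congr 1
          have : ∀ i : Fin d, hi i - lo i = S / 2 ^ j := by
            intro i; rw [hhi, hlo]; field_simp; ring
          rw [Finset.prod_congr rfl fun i _ => by rw [this i]]
          rw [Finset.prod_const, Finset.card_univ, Fintype.card_fin,
            ENNReal.ofReal_pow (by positivity)]
      _ = ENNReal.ofReal (|c j p| * (w * M) * (S / 2 ^ j) ^ d) := by
          rw [← ENNReal.ofReal_mul (by positivity)]
  calc ∫⁻ x : Fin d → ℝ, (‖∑ p ∈ (c j).support,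
        c j p * (w * ψ p.2 (fun i => 2 ^ j * x i - p.1 i))‖₊ : ℝ≥0∞)
      ≤ ∫⁻ x, ∑ p ∈ (c j).support, h p x := lintegral_mono hpt
    _ = ∑ p ∈ (c j).support, ∫⁻ x, h p x := lintegral_finset_sum _ (fun p _ => hhmeas p)
    _ ≤ ∑ p ∈ (c j).support, ENNReal.ofReal (|c j p| * (w * M) * (S / 2 ^ j) ^ d) :=
        Finset.sum_le_sum fun p _ => hterm p
    _ = ENNReal.ofReal (∑ p ∈ (c j).support, |c j p| * ((w * M) * (S / 2 ^ j) ^ d)) := by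
        rw [ENNReal.ofReal_sum_of_nonneg (fun p _ => by positivity)]
        exact Finset.sum_congr rfl fun p _ => by ring_nf
    _ ≤ ENNReal.ofReal (M * S^d * B * (2:ℝ) ^ (-(j:ℝ))) := by
        apply ENNReal.ofReal_le_ofReal
        rw [← Finset.sum_mul]
        have hfac : (0:ℝ) ≤ (w * M) * (S / 2 ^ j) ^ d := by positivity
        calc (∑ p ∈ (c j).support, |c j p|) * ((w * M) * (S / 2 ^ j) ^ d)
            ≤ ((2 : ℝ) ^ ((j : ℝ) * ((d : ℝ) / 2 - 1)) * B) * ((w * M) * (S / 2 ^ j) ^ d) :=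
              mul_le_mul_of_nonneg_right (hcl1 j) hfac
          _ = M * S^d * B * ((2 : ℝ) ^ ((j : ℝ) * ((d : ℝ) / 2 - 1)) * w * ((2:ℝ) ^ j)⁻¹ ^ d) := by
              rw [div_pow]; ring
          _ = M * S^d * B * (2:ℝ) ^ (-(j:ℝ)) := by
              congr 1
              rw [hw, ← Real.rpow_add two_pos, ← Real.rpow_natCast (2:ℝ) j,
                ← Real.rpow_neg (by norm_num), ← Real.rpow_natCast ((2:ℝ) ^ (-(j:ℝ))) d,
                ← Real.rpow_mul (by norm_num), ← Real.rpow_add two_pos]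
              congr 1
              ring

/-- Interpolation between the sup bound and the L¹ bound. -/
private lemma wavelet_aux_interp
    (d : ℕ) (K L : ℝ) (hK0 : 0 < K) (hL0 : 0 ≤ L)
    (A B : ℝ) (hA : 0 ≤ A) (hB : 0 ≤ B) (j : ℕ)
    (q : ℝ) (hq0 : 0 < q) (hq2 : 2 ≤ q)
    (f : (Fin d → ℝ) → ℝ)
    (hsup : ∀ x, |f x| ≤ K * A)
    (hL1 : ∫⁻ x, (‖f x‖₊ : ℝ≥0∞) ≤ ENNReal.ofReal (L * B * (2:ℝ) ^ (-(j:ℝ)))) :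
    eLpNorm f (ENNReal.ofReal q) volume
      ≤ ENNReal.ofReal ((K ^ (1 - 1/q) * L ^ (1/q))
          * ((2 : ℝ) ^ (-1/q : ℝ)) ^ j * A ^ (1 - 1/q) * B ^ (1/q)) := by
  have hp0 : ENNReal.ofReal q ≠ 0 := by
    simp only [ne_eq, ENNReal.ofReal_eq_zero, not_le]; linarith
  have hpt : ENNReal.ofReal q ≠ ⊤ := ENNReal.ofReal_ne_top
  rw [eLpNorm_eq_lintegral_rpow_enorm_toReal hp0 hpt, ENNReal.toReal_ofReal hq0.le]
  simp only [enorm_eq_nnnorm]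
  have hptw : ∀ x, (‖f x‖₊ : ℝ≥0∞) ^ q ≤ ENNReal.ofReal (K*A) ^ (q-1) * (‖f x‖₊ : ℝ≥0∞) := by
    intro x
    have hble : (‖f x‖₊ : ℝ≥0∞) ≤ ENNReal.ofReal (K*A) := by
      rw [← enorm_eq_nnnorm, ← ofReal_norm, Real.norm_eq_abs]
      exact ENNReal.ofReal_le_ofReal (hsup x)
    by_cases h0 : (‖f x‖₊ : ℝ≥0∞) = 0
    · rw [h0, ENNReal.zero_rpow_of_pos hq0]; exact zero_le
    · have hsplit : (‖f x‖₊ : ℝ≥0∞) ^ q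
          = (‖f x‖₊ : ℝ≥0∞) ^ (q-1) * (‖f x‖₊ : ℝ≥0∞) := by
        nth_rewrite 1 [show q = (q-1) + 1 by ring]
        rw [ENNReal.rpow_add _ _ h0 ENNReal.coe_ne_top, ENNReal.rpow_one]
      rw [hsplit]
      exact mul_le_mul' (ENNReal.rpow_le_rpow hble (by linarith)) le_rfl
  have hC : ENNReal.ofReal (K*A) ^ (q-1) ≠ ⊤ :=
    ENNReal.rpow_ne_top_of_nonneg (by linarith) ENNReal.ofReal_ne_top
  calc (∫⁻ x, (‖f x‖₊ : ℝ≥0∞) ^ q) ^ (1/q)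
      ≤ (∫⁻ x, ENNReal.ofReal (K*A) ^ (q-1) * (‖f x‖₊ : ℝ≥0∞)) ^ (1/q) :=
        ENNReal.rpow_le_rpow (lintegral_mono hptw) (by positivity)
    _ = (ENNReal.ofReal (K*A) ^ (q-1) * ∫⁻ x, (‖f x‖₊ : ℝ≥0∞)) ^ (1/q) := by
        rw [lintegral_const_mul' _ _ hC]
    _ ≤ (ENNReal.ofReal (K*A) ^ (q-1) * ENNReal.ofReal (L * B * (2:ℝ) ^ (-(j:ℝ)))) ^ (1/q) :=
        ENNReal.rpow_le_rpow (mul_le_mul' le_rfl hL1) (one_div_nonneg.mpr hq0.le)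
    _ = ENNReal.ofReal (((K*A)^(q-1) * (L * B * (2:ℝ) ^ (-(j:ℝ))))^(1/q)) := by
        rw [ENNReal.ofReal_rpow_of_nonneg (by positivity) (by linarith : (0:ℝ) ≤ q - 1),
          ← ENNReal.ofReal_mul (by positivity),
          ENNReal.ofReal_rpow_of_nonneg (by positivity) (one_div_nonneg.mpr hq0.le)]
    _ = ENNReal.ofReal ((K ^ (1 - 1/q) * L ^ (1/q))
          * ((2 : ℝ) ^ (-1/q : ℝ)) ^ j * A ^ (1 - 1/q) * B ^ (1/q)) := by
        congr 1
        have e1 : ((K*A)^(q-1))^(1/q) = K^(1-1/q) * A^(1-1/q) := by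
          rw [← Real.rpow_mul (by positivity), show (q-1)*(1/q) = 1-1/q by field_simp,
            Real.mul_rpow hK0.le hA]
        have e2 : ((2:ℝ) ^ (-(j:ℝ)))^(1/q) = ((2:ℝ)^(-1/q:ℝ))^(j:ℕ) := by
          rw [← Real.rpow_natCast ((2:ℝ)^(-1/q:ℝ)) j, ← Real.rpow_mul (by norm_num),
            ← Real.rpow_mul (by norm_num)]
          congr 1
          ring
        rw [Real.mul_rpow (x := (K*A)^(q-1)) (hx := by positivity) (hy := by positivity),
          e1, Real.mul_rpow (x := L*B) (hx := by positivity) (hy := by positivity),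
          Real.mul_rpow hL0 hB, e2]
        ring

end WaveletAux

/-- High-frequency tail estimate (from the proof of Proposition 8 of the paper): if the
coefficients at each level `j` satisfy `sup |c_{j,k,e}| ≤ 2^{-jd/2} A` and
`Σ |c_{j,k,e}| ≤ 2^{j(d/2-1)} B`, then for `2 ≤ q ≤ 3` there is `C > 0` (depending only
on `d, q, S, M, #E`) such that for all `J < J'`,
`‖Σ_{j=J+1}^{J'} Σ_{k,e} c_{j,k,e} ψ_{j,k,e}‖_{L^q} ≤ C 2^{-J/q} A^{1-1/q} B^{1/q}`. -/
theorem wavelet_high_frequency_tail_bound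
    (d : ℕ) (hd : 1 ≤ d) {E : Type*} [Fintype E] [Nonempty E]
    (S M : ℝ) (hS : 1 ≤ S) (hM : 0 < M)
    (ψ : E → (Fin d → ℝ) → ℝ)
    (hmeas : ∀ e, Measurable (ψ e))
    (hbd : ∀ e x, |ψ e x| ≤ M)
    (hsupp : ∀ e x, x ∉ Set.Icc (0 : Fin d → ℝ) (fun _ => S) → ψ e x = 0)
    (A B : ℝ) (hA : 0 ≤ A) (hB : 0 ≤ B)
    (c : ℕ → ((Fin d → ℤ) × E) →₀ ℝ)
    (hcsup : ∀ (j : ℕ) (p : (Fin d → ℤ) × E), |c j p| ≤ (2 : ℝ) ^ (-((j : ℝ) * d) / 2) * A)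
    (hcl1 : ∀ j : ℕ, ∑ p ∈ (c j).support, |c j p| ≤ (2 : ℝ) ^ ((j : ℝ) * ((d : ℝ) / 2 - 1)) * B)
    (q : ℝ) (hq2 : 2 ≤ q) (hq3 : q ≤ 3) :
    ∃ C > 0, ∀ J J' : ℕ, J < J' →
      eLpNorm
        (fun x : Fin d → ℝ =>
          ∑ j ∈ Finset.Ioc J J', ∑ p ∈ (c j).support,
            c j p * ((2 : ℝ) ^ ((j : ℝ) * d / 2) * ψ p.2 (fun i => 2 ^ j * x i - p.1 i)))
        (ENNReal.ofReal q) volume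
      ≤ ENNReal.ofReal
          (C * (2 : ℝ) ^ (-(J : ℝ) / q) * A ^ (1 - 1 / q) * B ^ (1 / q)) := by
  classical
  have hq0 : (0:ℝ) < q := by linarith
  set K : ℝ := (S+1)^d * (Fintype.card E) * M with hKdef
  have hK0 : 0 < K := by
    apply mul_pos (mul_pos (pow_pos (by linarith) d) _) hM
    exact_mod_cast Fintype.card_pos
  set L : ℝ := M * S^d with hLdef
  have hL0 : (0:ℝ) < L := by positivity
  set r : ℝ := (2:ℝ) ^ (-1/q : ℝ) with hrdef
  have hr0 : 0 < r := Real.rpow_pos_of_pos two_pos _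
  have hr1 : r < 1 := by
    apply Real.rpow_lt_one_of_one_lt_of_neg one_lt_two
    rw [neg_div]
    simp only [Left.neg_neg_iff]
    positivity
  have h1r : 0 < 1 - r := by linarith
  set D : ℝ := K ^ (1 - 1/q) * L ^ (1/q) with hDdef
  have hD0 : 0 < D := by positivity
  refine ⟨D * (1-r)⁻¹, by positivity, ?_⟩
  intro J J' hJJ
  set f : ℕ → (Fin d → ℝ) → ℝ := fun j x => ∑ p ∈ (c j).support,
      c j p * ((2 : ℝ) ^ ((j : ℝ) * d / 2) * ψ p.2 (fun i => 2 ^ j * x i - p.1 i)) with hfdef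
  have hfmeas : ∀ j, Measurable (f j) := by
    intro j
    apply Finset.measurable_sum
    intro p _
    apply Measurable.const_mul
    apply Measurable.const_mul
    exact (hmeas p.2).comp (by
      apply measurable_pi_lambda
      intro i
      exact ((measurable_pi_apply i).const_mul _).sub_const _)
  have hlevel : ∀ j : ℕ, eLpNorm (f j) (ENNReal.ofReal q) volume
      ≤ ENNReal.ofReal (D * r ^ j * A ^ (1 - 1/q) * B ^ (1/q)) := by
    intro j
    exact wavelet_aux_interp d K L hK0 hL0.le A B hA hB j q hq0 hq2 (f j)
      (fun x => wavelet_aux_sup d S M hS hM ψ hbd hsupp A hA c hcsup j x)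
      (wavelet_aux_l1 d S M hS hM ψ hmeas hbd hsupp B c hcl1 j)
  have hgeom : ∑ j ∈ Finset.Ioc J J', r ^ j ≤ r ^ J * (1-r)⁻¹ := by
    have hIoc : Finset.Ioc J J' = Finset.Ico (J+1) (J'+1) := by
      rw [Finset.Ico_add_one_right_eq_Icc, Finset.Icc_add_one_left_eq_Ioc]
    rw [hIoc, Finset.sum_Ico_eq_sum_range]
    have : ∀ i, r ^ (J + 1 + i) = r ^ (J+1) * r ^ i := fun i => pow_add r (J+1) i
    rw [Finset.sum_congr rfl fun i _ => this i, ← Finset.mul_sum]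
    have hsum : ∑ i ∈ Finset.range (J' + 1 - (J + 1)), r ^ i ≤ (1-r)⁻¹ := by
      refine (Summable.sum_le_tsum _ (fun i _ => by positivity)
        (summable_geometric_of_lt_one hr0.le hr1)).trans ?_
      rw [tsum_geometric_of_lt_one hr0.le hr1]
    calc r ^ (J+1) * ∑ i ∈ Finset.range (J' + 1 - (J + 1)), r ^ i
        ≤ r ^ (J+1) * (1-r)⁻¹ := by
          exact mul_le_mul_of_nonneg_left hsum (by positivity)
      _ ≤ r ^ J * (1-r)⁻¹ := by
          apply mul_le_mul_of_nonneg_right _ (by positivity)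
          rw [pow_succ]
          nth_rewrite 2 [← mul_one (r ^ J)]
          exact mul_le_mul_of_nonneg_left hr1.le (by positivity)
  have hrJ : r ^ J = (2:ℝ) ^ (-(J:ℝ)/q) := by
    rw [hrdef, ← Real.rpow_natCast ((2:ℝ)^(-1/q:ℝ)) J, ← Real.rpow_mul (by norm_num)]
    congr 1
    ring
  have hfun : (fun x : Fin d → ℝ => ∑ j ∈ Finset.Ioc J J', f j x)
      = ∑ j ∈ Finset.Ioc J J', f j := by
    funext x
    rw [Finset.sum_apply]
  rw [show (fun x : Fin d → ℝ =>
      ∑ j ∈ Finset.Ioc J J', ∑ p ∈ (c j).support,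
        c j p * ((2 : ℝ) ^ ((j : ℝ) * d / 2) * ψ p.2 (fun i => 2 ^ j * x i - p.1 i)))
      = ∑ j ∈ Finset.Ioc J J', f j from hfun]
  calc eLpNorm (∑ j ∈ Finset.Ioc J J', f j) (ENNReal.ofReal q) volume
      ≤ ∑ j ∈ Finset.Ioc J J', eLpNorm (f j) (ENNReal.ofReal q) volume := by
        refine eLpNorm_sum_le (fun j _ => (hfmeas j).aestronglyMeasurable) ?_
        rw [ENNReal.one_le_ofReal]
        linarith
    _ ≤ ∑ j ∈ Finset.Ioc J J', ENNReal.ofReal (D * r ^ j * A ^ (1 - 1/q) * B ^ (1/q)) :=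
        Finset.sum_le_sum fun j _ => hlevel j
    _ = ENNReal.ofReal (∑ j ∈ Finset.Ioc J J', D * r ^ j * A ^ (1 - 1/q) * B ^ (1/q)) := by
        rw [ENNReal.ofReal_sum_of_nonneg (fun j _ => by positivity)]
    _ ≤ ENNReal.ofReal ((D * (1-r)⁻¹) * (2:ℝ) ^ (-(J:ℝ)/q) * A ^ (1 - 1/q) * B ^ (1/q)) := by
        apply ENNReal.ofReal_le_ofReal
        have : ∑ j ∈ Finset.Ioc J J', D * r ^ j * A ^ (1 - 1/q) * B ^ (1/q)
            = (D * A ^ (1 - 1/q) * B ^ (1/q)) * ∑ j ∈ Finset.Ioc J J', r ^ j := by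
          rw [Finset.mul_sum]
          exact Finset.sum_congr rfl fun j _ => by ring
        rw [this, ← hrJ]
        calc (D * A ^ (1 - 1/q) * B ^ (1/q)) * ∑ j ∈ Finset.Ioc J J', r ^ j
            ≤ (D * A ^ (1 - 1/q) * B ^ (1/q)) * (r ^ J * (1-r)⁻¹) :=
              mul_le_mul_of_nonneg_left hgeom (by positivity)
          _ = D * (1-r)⁻¹ * r ^ J * A ^ (1 - 1/q) * B ^ (1/q) := by ring
end

section
/- Let d ≥ 1, β ≥ 0 and 0 < a₁ ≤ a₂. Let 𝓕 denote the Fourier transform on ℝ^d with convention 𝓕g(ξ) = ∫_{ℝ^d} g(x) e^{−2πi x·ξ} dx, extended unitarily to L²(ℝ^d). Let K ∈ L¹(ℝ^d) satisfy a₁ (1 + |ξ|²)^{−β/2} ≤ |𝓕K(ξ)| ≤ a₂ (1 + |ξ|²)^{−β/2} for all ξ ∈ ℝ^d, and let ψ ∈ L²(ℝ^d) satisfy ∫_{ℝ^d} (1 + |ξ|²)^β |𝓕ψ(ξ)|² dξ < ∞. Fix j ∈ ℕ and k ∈ ℤ^d and define v : ℝ^d → ℂ by v(ξ) := 2^{−jd/2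 − jβ} e^{−2πi ξ·(2^{−j}k)} 𝓕ψ(2^{−j}ξ) / 𝓕K(−ξ). Then v ∈ L²(ℝ^d) and a₂^{−2} ∫_{ℝ^d} |ξ|^{2β} |𝓕ψ(ξ)|² dξ ≤ ∫_{ℝ^d} |v(ξ)|² dξ ≤ a₁^{−2} ∫_{ℝ^d} (1 + |ξ|²)^β |𝓕ψ(ξ)|² dξ. -/
open MeasureTheory Complex
open scoped FourierTransform Real ENNReal ComplexConjugate

/-- Proposition 9 of the paper (norm bounds for deconvolution vaguelettes, in Fourier form).
`K ∈ L¹(ℝ^d)` has Fourier transform comparable to `(1+|ξ|²)^{-β/2}`, `ψ ∈ L²(ℝ^d)` has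
Fourier–Plancherel transform `w` (characterized by Parseval's relation against `L¹ ∩ L²`
functions) with finite `H^β` integral. Then the Fourier transform
`v(ξ) = 2^{-jd/2-jβ} e^{-2πi ξ·(2^{-j}k)} w(2^{-j}ξ)/𝓕K(-ξ)` of the vaguelette `u_{j,k}`
is in `L²` and `a₂⁻² ∫ |ξ|^{2β} |w(ξ)|² dξ ≤ ∫ |v|² ≤ a₁⁻² ∫ (1+|ξ|²)^β |w(ξ)|² dξ`. -/
theorem vaguelette_L2_norm_bounds
    (d : ℕ) (hd : 1 ≤ d) (β : ℝ) (hβ : 0 ≤ β)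
    (a₁ a₂ : ℝ) (ha₁ : 0 < a₁) (ha₁₂ : a₁ ≤ a₂)
    (K : EuclideanSpace ℝ (Fin d) → ℂ) (hK : Integrable K)
    (hKlow : ∀ ξ : EuclideanSpace ℝ (Fin d),
      a₁ * (1 + ‖ξ‖ ^ 2) ^ (-β / 2) ≤ ‖𝓕 K ξ‖)
    (hKup : ∀ ξ : EuclideanSpace ℝ (Fin d),
      ‖𝓕 K ξ‖ ≤ a₂ * (1 + ‖ξ‖ ^ 2) ^ (-β / 2))
    (ψ : EuclideanSpace ℝ (Fin d) → ℝ) (hψ : MemLp ψ 2 volume)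
    (w : EuclideanSpace ℝ (Fin d) → ℂ) (hw : MemLp w 2 volume)
    -- `w` is the Fourier–Plancherel transform of `ψ`: Parseval's relation holds against
    -- the Fourier transform of every `g ∈ L¹ ∩ L²`.
    (hPlancherel : ∀ g : EuclideanSpace ℝ (Fin d) → ℂ, Integrable g → MemLp g 2 volume →
      ∫ ξ, w ξ * conj (𝓕 g ξ) = ∫ x, (ψ x : ℂ) * conj (g x))
    (hSobolev : Integrable
      (fun ξ : EuclideanSpace ℝ (Fin d) => (1 + ‖ξ‖ ^ 2) ^ β * ‖w ξ‖ ^ 2))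
    (j : ℕ) (k : Fin d → ℤ)
    (v : EuclideanSpace ℝ (Fin d) → ℂ)
    (hv : ∀ ξ : EuclideanSpace ℝ (Fin d),
      v ξ = ((2 : ℝ) ^ (-((j : ℝ) * d / 2) - (j : ℝ) * β) : ℝ) *
        Complex.exp (-2 * Real.pi * Complex.I *
          ((2 : ℝ) ^ (-(j : ℝ)) * ∑ i, ξ i * (k i : ℝ) : ℝ)) *
        w ((2 : ℝ) ^ (-(j : ℝ)) • ξ) / 𝓕 K (-ξ)) :
    MemLp v 2 volume ∧
    a₂ ^ (-2 : ℤ) * ∫ ξ : EuclideanSpace ℝ (Fin d), ‖ξ‖ ^ (2 * β) * ‖w ξ‖ ^ 2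
        ≤ ∫ ξ : EuclideanSpace ℝ (Fin d), ‖v ξ‖ ^ 2 ∧
      (∫ ξ : EuclideanSpace ℝ (Fin d), ‖v ξ‖ ^ 2)
        ≤ a₁ ^ (-2 : ℤ) *
            ∫ ξ : EuclideanSpace ℝ (Fin d), (1 + ‖ξ‖ ^ 2) ^ β * ‖w ξ‖ ^ 2 := by
  have ha₂ : 0 < a₂ := lt_of_lt_of_le ha₁ ha₁₂
  set r : ℝ := (2 : ℝ) ^ (-(j : ℝ)) with hr_def
  have hr : 0 < r := Real.rpow_pos_of_pos two_pos _
  have hr1 : r ≤ 1 := Real.rpow_le_one_of_one_le_of_nonpos (by norm_num)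
    (neg_nonpos.mpr (Nat.cast_nonneg j))
  set c : ℝ := ((2 : ℝ) ^ (-((j : ℝ) * d / 2) - (j : ℝ) * β)) ^ 2 with hc_def
  have hc : 0 < c := by positivity
  clear_value r c
  have hQ : ∀ ξ : EuclideanSpace ℝ (Fin d), (0 : ℝ) < 1 + ‖ξ‖ ^ 2 := fun ξ => by positivity
  have hKpos : ∀ ξ : EuclideanSpace ℝ (Fin d), 0 < ‖𝓕 K ξ‖ := fun ξ =>
    lt_of_lt_of_le (by positivity) (hKlow ξ)
  -- measurability of v
  have hKc : Continuous (𝓕 K) :=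
    VectorFourier.fourierIntegral_continuous Real.continuous_fourierChar
      (by exact continuous_inner) hK
  have hqmp : Measure.QuasiMeasurePreserving
      (fun ξ : EuclideanSpace ℝ (Fin d) => r • ξ) volume volume := by
    refine ⟨measurable_const_smul r, ?_⟩
    rw [Measure.map_addHaar_smul volume hr.ne']
    exact Measure.smul_absolutelyContinuous
  have hwr : AEStronglyMeasurable (fun ξ : EuclideanSpace ℝ (Fin d) => w (r • ξ)) volume :=
    hw.1.comp_quasiMeasurePreserving hqmp
  have hexpc : Continuous (fun ξ : EuclideanSpace ℝ (Fin d) =>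
      Complex.exp (-2 * Real.pi * Complex.I * ((r * ∑ i, ξ i * (k i : ℝ) : ℝ)))) := by
    fun_prop
  have hvasm : AEStronglyMeasurable v volume := by
    have hveq : v = fun ξ : EuclideanSpace ℝ (Fin d) =>
        (((2 : ℝ) ^ (-((j : ℝ) * d / 2) - (j : ℝ) * β) : ℝ) : ℂ) *
        Complex.exp (-2 * Real.pi * Complex.I * ((r * ∑ i, ξ i * (k i : ℝ) : ℝ))) *
        w (r • ξ) / 𝓕 K (-ξ) := funext hv
    rw [hveq]
    simp only [div_eq_mul_inv]
    exact ((aestronglyMeasurable_const.mul hexpc.aestronglyMeasurable).mul hwr).mul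
      ((hKc.measurable.comp measurable_neg).inv.aestronglyMeasurable)
  -- pointwise formula for |v|²
  have habs : ∀ ξ : EuclideanSpace ℝ (Fin d), ‖v ξ‖ ^ 2
      = c * (‖w (r • ξ)‖ ^ 2 / ‖𝓕 K (-ξ)‖ ^ 2) := by
    intro ξ
    rw [hv ξ, norm_div, norm_mul, norm_mul, Complex.norm_real, Real.norm_eq_abs]
    have h1 : (-2 * (Real.pi : ℂ) * Complex.I * ((r * ∑ i, ξ i * (k i : ℝ) : ℝ) : ℂ))
        = ((-2 * Real.pi * (r * ∑ i, ξ i * (k i : ℝ)) : ℝ) : ℂ) * Complex.I := by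
      push_cast; ring
    rw [h1, Complex.norm_exp_ofReal_mul_I,
      abs_of_pos (Real.rpow_pos_of_pos two_pos _), div_pow, mul_pow, mul_pow, one_pow, mul_one,
      hc_def]
    ring
  -- bounds on |𝓕K(-ξ)|²
  have hrq : ∀ ξ : EuclideanSpace ℝ (Fin d),
      ((1 + ‖ξ‖ ^ 2) ^ (-β / 2 : ℝ)) ^ 2 = (1 + ‖ξ‖ ^ 2) ^ (-β : ℝ) := by
    intro ξ
    rw [← Real.rpow_natCast ((1 + ‖ξ‖ ^ 2) ^ (-β / 2 : ℝ)) 2, ← Real.rpow_mul (hQ ξ).le]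
    norm_num
  have hKsqlow : ∀ ξ : EuclideanSpace ℝ (Fin d),
      a₁ ^ 2 * (1 + ‖ξ‖ ^ 2) ^ (-β : ℝ) ≤ ‖𝓕 K (-ξ)‖ ^ 2 := by
    intro ξ
    have hlow := hKlow (-ξ)
    rw [norm_neg] at hlow
    calc a₁ ^ 2 * (1 + ‖ξ‖ ^ 2) ^ (-β : ℝ)
        = (a₁ * (1 + ‖ξ‖ ^ 2) ^ (-β / 2 : ℝ)) ^ 2 := by rw [mul_pow, hrq]
      _ ≤ ‖𝓕 K (-ξ)‖ ^ 2 := pow_le_pow_left₀ (by positivity) hlow 2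
  have hKsqup : ∀ ξ : EuclideanSpace ℝ (Fin d),
      ‖𝓕 K (-ξ)‖ ^ 2 ≤ a₂ ^ 2 * (1 + ‖ξ‖ ^ 2) ^ (-β : ℝ) := by
    intro ξ
    have hup := hKup (-ξ)
    rw [norm_neg] at hup
    calc ‖𝓕 K (-ξ)‖ ^ 2
        ≤ (a₂ * (1 + ‖ξ‖ ^ 2) ^ (-β / 2 : ℝ)) ^ 2 :=
          pow_le_pow_left₀ (norm_nonneg _) hup 2
      _ = a₂ ^ 2 * (1 + ‖ξ‖ ^ 2) ^ (-β : ℝ) := by rw [mul_pow, hrq]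
  -- the comparison function B
  set B : EuclideanSpace ℝ (Fin d) → ℝ :=
    fun ξ => c * ((1 + ‖ξ‖ ^ 2) ^ β * ‖w (r • ξ)‖ ^ 2) with hB_def
  have hB_nonneg : ∀ ξ, 0 ≤ B ξ := fun ξ => by
    simp only [hB_def]
    exact mul_nonneg hc.le (by positivity)
  -- pointwise two-sided bound for |v ξ|²
  have hdivub : ∀ ξ : EuclideanSpace ℝ (Fin d),
      ‖v ξ‖ ^ 2 ≤ a₁ ^ (-2 : ℤ) * B ξ := by
    intro ξ
    rw [habs ξ]
    have key : ‖w (r • ξ)‖ ^ 2 / ‖𝓕 K (-ξ)‖ ^ 2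
        ≤ ‖w (r • ξ)‖ ^ 2 / (a₁ ^ 2 * (1 + ‖ξ‖ ^ 2) ^ (-β : ℝ)) :=
      div_le_div_of_nonneg_left (by positivity)
        (by have := Real.rpow_pos_of_pos (hQ ξ) (-β); positivity) (hKsqlow ξ)
    have heq : c * (‖w (r • ξ)‖ ^ 2 / (a₁ ^ 2 * (1 + ‖ξ‖ ^ 2) ^ (-β : ℝ)))
        = a₁ ^ (-2 : ℤ) * B ξ := by
      simp only [hB_def]
      rw [Real.rpow_neg (hQ ξ).le, zpow_neg, zpow_two, div_eq_mul_inv, mul_inv, inv_inv]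
      ring
    calc c * (‖w (r • ξ)‖ ^ 2 / ‖𝓕 K (-ξ)‖ ^ 2)
        ≤ c * (‖w (r • ξ)‖ ^ 2 / (a₁ ^ 2 * (1 + ‖ξ‖ ^ 2) ^ (-β : ℝ))) := by
          exact mul_le_mul_of_nonneg_left key hc.le
      _ = a₁ ^ (-2 : ℤ) * B ξ := heq
  have hdivlb : ∀ ξ : EuclideanSpace ℝ (Fin d),
      a₂ ^ (-2 : ℤ) * B ξ ≤ ‖v ξ‖ ^ 2 := by
    intro ξ
    rw [habs ξ]
    have key : ‖w (r • ξ)‖ ^ 2 / (a₂ ^ 2 * (1 + ‖ξ‖ ^ 2) ^ (-β : ℝ))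
        ≤ ‖w (r • ξ)‖ ^ 2 / ‖𝓕 K (-ξ)‖ ^ 2 :=
      div_le_div_of_nonneg_left (by positivity) (pow_pos (hKpos (-ξ)) 2) (hKsqup ξ)
    have heq : c * (‖w (r • ξ)‖ ^ 2 / (a₂ ^ 2 * (1 + ‖ξ‖ ^ 2) ^ (-β : ℝ)))
        = a₂ ^ (-2 : ℤ) * B ξ := by
      simp only [hB_def]
      rw [Real.rpow_neg (hQ ξ).le, zpow_neg, zpow_two, div_eq_mul_inv, mul_inv, inv_inv]
      ring
    calc a₂ ^ (-2 : ℤ) * B ξ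
        = c * (‖w (r • ξ)‖ ^ 2 / (a₂ ^ 2 * (1 + ‖ξ‖ ^ 2) ^ (-β : ℝ))) := heq.symm
      _ ≤ c * (‖w (r • ξ)‖ ^ 2 / ‖𝓕 K (-ξ)‖ ^ 2) :=
          mul_le_mul_of_nonneg_left key hc.le
  -- the rescaled function F, its integrability, and B ξ = c * F (r • ξ)
  set F : EuclideanSpace ℝ (Fin d) → ℝ :=
    fun η => (1 + (r⁻¹ * ‖η‖) ^ 2) ^ β * ‖w η‖ ^ 2 with hF_def
  have hBF : ∀ ξ, B ξ = c * F (r • ξ) := by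
    intro ξ
    simp only [hB_def, hF_def]
    have : r⁻¹ * ‖r • ξ‖ = ‖ξ‖ := by
      rw [norm_smul, Real.norm_eq_abs, abs_of_pos hr]
      field_simp
    simp only [this]
  have habs_w_asm : AEStronglyMeasurable
      (fun η : EuclideanSpace ℝ (Fin d) => ‖w η‖ ^ 2) volume := by
    have h := continuous_norm.comp_aestronglyMeasurable hw.1
    exact h.pow 2
  have hFasm : AEStronglyMeasurable F volume := by
    have h1 : Continuous (fun η : EuclideanSpace ℝ (Fin d) => (1 + (r⁻¹ * ‖η‖) ^ 2) ^ β) := by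
      apply Continuous.rpow_const
      · fun_prop
      · intro x; exact Or.inr hβ
    exact h1.aestronglyMeasurable.mul habs_w_asm
  have hrinv1 : (1 : ℝ) ≤ r⁻¹ ^ 2 := by
    have : (1 : ℝ) ≤ r⁻¹ := (one_le_inv_iff₀).2 ⟨hr, hr1⟩
    nlinarith
  have hFint : Integrable F := by
    refine (hSobolev.const_mul ((r⁻¹ ^ 2) ^ β)).mono' hFasm (ae_of_all _ fun η => ?_)
    have hnn : 0 ≤ F η := by
      simp only [hF_def]
      positivity
    rw [Real.norm_eq_abs, _root_.abs_of_nonneg hnn]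
    simp only [hF_def]
    have hb : (1 + (r⁻¹ * ‖η‖) ^ 2) ^ β ≤ (r⁻¹ ^ 2) ^ β * (1 + ‖η‖ ^ 2) ^ β := by
      rw [← Real.mul_rpow (by positivity) (hQ η).le]
      apply Real.rpow_le_rpow (by positivity) _ hβ
      have : (1 : ℝ) + (r⁻¹ * ‖η‖) ^ 2 = 1 + r⁻¹ ^ 2 * ‖η‖ ^ 2 := by ring
      rw [this]
      nlinarith [sq_nonneg ‖η‖, hrinv1]
    calc (1 + (r⁻¹ * ‖η‖) ^ 2) ^ β * ‖w η‖ ^ 2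
        ≤ ((r⁻¹ ^ 2) ^ β * (1 + ‖η‖ ^ 2) ^ β) * ‖w η‖ ^ 2 :=
          mul_le_mul_of_nonneg_right hb (by positivity)
      _ = (r⁻¹ ^ 2) ^ β * ((1 + ‖η‖ ^ 2) ^ β * ‖w η‖ ^ 2) := by ring
  have hBint : Integrable B := by
    have h1 : Integrable (fun ξ : EuclideanSpace ℝ (Fin d) => F (r • ξ)) :=
      hFint.comp_smul hr.ne'
    have := h1.const_mul c
    refine this.congr (ae_of_all _ fun ξ => ?_)
    exact (hBF ξ).symm
  -- integrability of |v|² and the Memℒp claim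
  have habs_v_asm : AEStronglyMeasurable
      (fun ξ : EuclideanSpace ℝ (Fin d) => ‖v ξ‖ ^ 2) volume := by
    have h := continuous_norm.comp_aestronglyMeasurable hvasm
    exact h.pow 2
  have hv2int : Integrable (fun ξ : EuclideanSpace ℝ (Fin d) => ‖v ξ‖ ^ 2) := by
    refine (hBint.const_mul (a₁ ^ (-2 : ℤ))).mono' habs_v_asm (ae_of_all _ fun ξ => ?_)
    rw [Real.norm_eq_abs, _root_.abs_of_nonneg (by positivity)]
    exact hdivub ξ
  have hmem : MemLp v 2 volume := by
    rw [memLp_two_iff_integrable_sq_norm hvasm]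
    simpa using hv2int
  -- change of variables
  have hpow2 : ∀ (a : ℝ) (n : ℕ), ((2 : ℝ) ^ (a : ℝ)) ^ n = (2 : ℝ) ^ (a * n) := fun a n => by
    rw [← Real.rpow_natCast ((2 : ℝ) ^ (a : ℝ)) n, ← Real.rpow_mul (by norm_num : (0:ℝ) ≤ 2)]
  have hd_rank : Module.finrank ℝ (EuclideanSpace ℝ (Fin d)) = d := finrank_euclideanSpace_fin
  have hcov : ∫ ξ : EuclideanSpace ℝ (Fin d), F (r • ξ) = (r ^ d)⁻¹ * ∫ η, F η := by
    rw [MeasureTheory.Measure.integral_comp_smul volume F r, hd_rank, smul_eq_mul,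
      _root_.abs_of_pos (inv_pos.2 (pow_pos hr d))]
  have hintB : ∫ ξ, B ξ = ∫ η, (c * (r ^ d)⁻¹) * F η := by
    calc ∫ ξ, B ξ = ∫ ξ : EuclideanSpace ℝ (Fin d), c * F (r • ξ) := by
          congr 1; exact funext hBF
      _ = c * ∫ ξ : EuclideanSpace ℝ (Fin d), F (r • ξ) := integral_const_mul _ _
      _ = c * ((r ^ d)⁻¹ * ∫ η, F η) := by rw [hcov]
      _ = ∫ η, (c * (r ^ d)⁻¹) * F η := by rw [integral_const_mul]; ring
  -- the scaling constant
  have hs : c * (r ^ d)⁻¹ = (r ^ 2) ^ β := by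
    rw [hc_def, hr_def, hpow2, hpow2, hpow2, ← Real.rpow_neg (by norm_num : (0:ℝ) ≤ 2),
      ← Real.rpow_add (by norm_num : (0:ℝ) < 2), ← Real.rpow_mul (by norm_num : (0:ℝ) ≤ 2)]
    congr 1
    push_cast
    ring
  have hr2pos : (0 : ℝ) < r ^ 2 := pow_pos hr 2
  have hr2le1 : r ^ 2 ≤ 1 := by nlinarith [hr.le, hr1]
  -- pointwise comparisons after rescaling
  have hsF : ∀ η : EuclideanSpace ℝ (Fin d),
      (c * (r ^ d)⁻¹) * F η = (r ^ 2 + ‖η‖ ^ 2) ^ β * ‖w η‖ ^ 2 := by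
    intro η
    have h0 : (0:ℝ) ≤ 1 + (r⁻¹ * ‖η‖) ^ 2 := by positivity
    have hmul : (r : ℝ) ^ 2 * (1 + (r⁻¹ * ‖η‖) ^ 2) = r ^ 2 + ‖η‖ ^ 2 := by
      have hrne : (r : ℝ) ≠ 0 := hr.ne'
      field_simp
    rw [hs]
    simp only [hF_def]
    rw [← mul_assoc, ← Real.mul_rpow hr2pos.le h0, hmul]
  have hup2 : ∀ η : EuclideanSpace ℝ (Fin d),
      (c * (r ^ d)⁻¹) * F η ≤ (1 + ‖η‖ ^ 2) ^ β * ‖w η‖ ^ 2 := by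
    intro η
    rw [hsF η]
    apply mul_le_mul_of_nonneg_right _ (by positivity)
    apply Real.rpow_le_rpow (by positivity) _ hβ
    linarith [hr2le1]
  have hlo2 : ∀ η : EuclideanSpace ℝ (Fin d),
      ‖η‖ ^ (2 * β) * ‖w η‖ ^ 2 ≤ (c * (r ^ d)⁻¹) * F η := by
    intro η
    rw [hsF η]
    apply mul_le_mul_of_nonneg_right _ (by positivity)
    have h1 : ‖η‖ ^ (2 * β) = (‖η‖ ^ 2) ^ β := by
      rw [← Real.rpow_natCast ‖η‖ 2, ← Real.rpow_mul (norm_nonneg η)]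
      norm_num
    rw [h1]
    apply Real.rpow_le_rpow (by positivity) _ hβ
    linarith [hr2pos.le]
  -- integrability of the lower comparison function
  have hLint : Integrable
      (fun η : EuclideanSpace ℝ (Fin d) => ‖η‖ ^ (2 * β) * ‖w η‖ ^ 2) := by
    refine hSobolev.mono' ?_ (ae_of_all _ fun η => ?_)
    · have h1 : Continuous (fun η : EuclideanSpace ℝ (Fin d) => ‖η‖ ^ (2 * β)) := by
        apply Continuous.rpow_const continuous_norm
        intro x; exact Or.inr (by positivity)
      exact h1.aestronglyMeasurable.mul habs_w_asm
    · rw [Real.norm_eq_abs, _root_.abs_of_nonneg (by positivity)]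
      apply mul_le_mul_of_nonneg_right _ (by positivity)
      have h1 : ‖η‖ ^ (2 * β) = (‖η‖ ^ 2) ^ β := by
        rw [← Real.rpow_natCast ‖η‖ 2, ← Real.rpow_mul (norm_nonneg η)]
        norm_num
      rw [h1]
      apply Real.rpow_le_rpow (by positivity) _ hβ
      linarith [sq_nonneg ‖η‖]
  have hsFint : Integrable
      (fun η : EuclideanSpace ℝ (Fin d) => (c * (r ^ d)⁻¹) * F η) :=
    hFint.const_mul _
  -- assemble
  refine ⟨hmem, ?_, ?_⟩
  · -- lower bound
    have step1 : ∫ η : EuclideanSpace ℝ (Fin d), ‖η‖ ^ (2 * β) * ‖w η‖ ^ 2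
        ≤ ∫ η, (c * (r ^ d)⁻¹) * F η := integral_mono hLint hsFint hlo2
    have step2 : ∫ ξ : EuclideanSpace ℝ (Fin d), a₂ ^ (-2 : ℤ) * B ξ
        ≤ ∫ ξ, ‖v ξ‖ ^ 2 :=
      integral_mono (hBint.const_mul _) hv2int hdivlb
    calc a₂ ^ (-2 : ℤ) * ∫ ξ : EuclideanSpace ℝ (Fin d), ‖ξ‖ ^ (2 * β) * ‖w ξ‖ ^ 2
        ≤ a₂ ^ (-2 : ℤ) * ∫ η, (c * (r ^ d)⁻¹) * F η :=
          mul_le_mul_of_nonneg_left step1 (zpow_nonneg ha₂.le _)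
      _ = a₂ ^ (-2 : ℤ) * ∫ ξ, B ξ := by rw [hintB]
      _ = ∫ ξ : EuclideanSpace ℝ (Fin d), a₂ ^ (-2 : ℤ) * B ξ := (integral_const_mul _ _).symm
      _ ≤ ∫ ξ, ‖v ξ‖ ^ 2 := step2
  · -- upper bound
    have step1 : ∫ ξ : EuclideanSpace ℝ (Fin d), ‖v ξ‖ ^ 2
        ≤ ∫ ξ, a₁ ^ (-2 : ℤ) * B ξ :=
      integral_mono hv2int (hBint.const_mul _) hdivub
    have step2 : ∫ η : EuclideanSpace ℝ (Fin d), (c * (r ^ d)⁻¹) * F η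
        ≤ ∫ η, (1 + ‖η‖ ^ 2) ^ β * ‖w η‖ ^ 2 :=
      integral_mono hsFint hSobolev hup2
    calc ∫ ξ : EuclideanSpace ℝ (Fin d), ‖v ξ‖ ^ 2
        ≤ ∫ ξ, a₁ ^ (-2 : ℤ) * B ξ := step1
      _ = a₁ ^ (-2 : ℤ) * ∫ ξ, B ξ := integral_const_mul _ _
      _ = a₁ ^ (-2 : ℤ) * ∫ η, (c * (r ^ d)⁻¹) * F η := by rw [hintB]
      _ ≤ a₁ ^ (-2 : ℤ) * ∫ η, (1 + ‖η‖ ^ 2) ^ β * ‖w η‖ ^ 2 :=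
          mul_le_mul_of_nonneg_left step2 (zpow_nonneg ha₁.le _)
end

section
/- Let d ≥ 1, β ≥ 0, S ≥ 1 and M > 0, let E be a nonempty finite index set, and for each e ∈ E let ψ_e : ℝ^d → ℝ be measurable with |ψ_e(x)| ≤ M for all x and ψ_e(x) = 0 for x ∉ [0,S]^d; define ψ_{j,k,e}(x) := 2^{jd/2} ψ_e(2^j x − k) for j ∈ ℕ, k ∈ ℤ^d, e ∈ E. Let H be a real Hilbert space, T : L²(ℝ^d) → H a bounded linear map, and suppose there exist elements u_{j,k,e} ∈ H such that ⟨T g, u_{j,k,e}⟩_H = 2^{−jβ} ⟨g, ψ_{j,k,e}⟩_{L²} for every g ∈ L²(ℝ^d) and every (j,k,e). Let n ≥ 2 be a natural number and set J := ⌈(log₂ n)/d⌉. If h ∈ L²(ℝ^d) ∩ L^∞(ℝ^d) satisfies |⟨T h, u_{j,k,e}⟩_H| ≤ η for all j ≤ J, k ∈ ℤ^d, e ∈ E, then sup_{j ∈ ℕ, k ∈ ℤ^d, e ∈ E} 2^{−jβ} |⟨h, ψ_{j,k,e}⟩_{L²}| ≤ η + S^d · M · ‖h‖_{L^∞} ·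 n^{−1/2}. -/
open MeasureTheory
open scoped ENNReal

/-- Deterministic core of part (i) of Proposition 5 of the paper: if `T` has a vaguelette
system `u_{j,k,e}` with `⟨Tg, u_{j,k,e}⟩ = 2^{-jβ} ⟨g, ψ_{j,k,e}⟩` for all `g ∈ L²`, and
`h ∈ L² ∩ L^∞` satisfies `|⟨Th, u_{j,k,e}⟩| ≤ η` for all scales `j ≤ J := ⌈(log₂ n)/d⌉`,
then the Besov `B^{-d/2-β}_{∞,∞}` coefficients of `h` satisfy
`2^{-jβ} |⟨h, ψ_{j,k,e}⟩| ≤ η + S^d M ‖h‖_{L^∞} n^{-1/2}` for all `j, k, e`. -/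
theorem besov_norm_bound_from_vaguelette_constraint
    (d : ℕ) (hd : 1 ≤ d) (β : ℝ) (hβ : 0 ≤ β)
    (S M : ℝ) (hS : 1 ≤ S) (hM : 0 < M)
    {E : Type*} [Fintype E] [Nonempty E]
    (ψ : E → (Fin d → ℝ) → ℝ)
    (hmeas : ∀ e, Measurable (ψ e))
    (hbd : ∀ e x, |ψ e x| ≤ M)
    (hsupp : ∀ e x, x ∉ Set.Icc (0 : Fin d → ℝ) (fun _ => S) → ψ e x = 0)
    {H : Type*} [NormedAddCommGroup H] [InnerProductSpace ℝ H]
    (T : Lp ℝ 2 (volume : Measure (Fin d → ℝ)) →L[ℝ] H)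
    (u : ℕ → (Fin d → ℤ) → E → H)
    (hvag : ∀ (j : ℕ) (k : Fin d → ℤ) (e : E)
        (g : Lp ℝ 2 (volume : Measure (Fin d → ℝ))),
      (inner ℝ (T g) (u j k e) : ℝ)
        = (2 : ℝ) ^ (-(j : ℝ) * β) *
            ∫ x : Fin d → ℝ,
              g x * ((2 : ℝ) ^ ((j : ℝ) * d / 2) * ψ e fun i => 2 ^ j * x i - k i))
    (n : ℕ) (hn : 2 ≤ n)
    (h : (Fin d → ℝ) → ℝ) (hh2 : MemLp h 2 volume) (hhTop : MemLp h ⊤ volume)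
    (η : ℝ)
    (hconstraint : ∀ j : ℕ, j ≤ ⌈Real.logb 2 n / d⌉₊ → ∀ (k : Fin d → ℤ) (e : E),
      |(inner ℝ (T (hh2.toLp h)) (u j k e) : ℝ)| ≤ η) :
    ∀ (j : ℕ) (k : Fin d → ℤ) (e : E),
      (2 : ℝ) ^ (-(j : ℝ) * β) *
          |∫ x : Fin d → ℝ,
              h x * ((2 : ℝ) ^ ((j : ℝ) * d / 2) * ψ e fun i => 2 ^ j * x i - k i)|
        ≤ η + S ^ d * M * (eLpNorm h ⊤ volume).toReal * (n : ℝ) ^ (-(1 : ℝ) / 2) := by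
  intro j k e
  set C : ℝ := (eLpNorm h ⊤ volume).toReal with hC
  have hC0 : 0 ≤ C := ENNReal.toReal_nonneg
  have hη0 : 0 ≤ η := le_trans (abs_nonneg _) (hconstraint 0 (Nat.zero_le _) k e)
  have hnpos : (0 : ℝ) < n := by positivity
  by_cases hj : j ≤ ⌈Real.logb 2 n / d⌉₊
  · -- small scales: use the constraint directly
    have hvag' := hvag j k e (hh2.toLp h)
    have hcongr :
        (∫ x : Fin d → ℝ, (hh2.toLp h : Lp ℝ 2 (volume : Measure (Fin d → ℝ))) x *
            ((2 : ℝ) ^ ((j : ℝ) * d / 2) * ψ e fun i => 2 ^ j * x i - k i))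
          = ∫ x : Fin d → ℝ,
              h x * ((2 : ℝ) ^ ((j : ℝ) * d / 2) * ψ e fun i => 2 ^ j * x i - k i) := by
      refine integral_congr_ae ?_
      filter_upwards [hh2.coeFn_toLp] with x hx
      rw [hx]
    have hle := hconstraint j hj k e
    rw [hvag', hcongr, abs_mul,
      abs_of_pos (by positivity : (0 : ℝ) < (2 : ℝ) ^ (-(j : ℝ) * β))] at hle
    have hpos : 0 ≤ S ^ d * M * C * (n : ℝ) ^ (-(1 : ℝ) / 2) := by positivity
    linarith
  · -- large scales: support/size bound
    push_neg at hj
    -- a.e. bound for h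
    have hae : ∀ᵐ x : Fin d → ℝ, ‖h x‖ ≤ C := by
      filter_upwards [ae_le_eLpNormEssSup (f := h) (μ := volume)] with x hx
      have hfin : eLpNormEssSup h volume ≠ ⊤ := by
        rw [← eLpNorm_exponent_top]; exact hhTop.2.ne
      have := ENNReal.toReal_mono hfin hx
      simpa [hC, eLpNorm_exponent_top] using this
    set a : Fin d → ℝ := fun i => (k i : ℝ) / 2 ^ j with ha
    set b : Fin d → ℝ := fun i => ((k i : ℝ) + S) / 2 ^ j with hb
    have h2jpos : (0 : ℝ) < 2 ^ j := by positivity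
    have hab : a ≤ b := by
      intro i
      simp only [ha, hb]
      gcongr
      linarith
    set f : (Fin d → ℝ) → ℝ :=
      fun x => h x * ((2 : ℝ) ^ ((j : ℝ) * d / 2) * ψ e fun i => 2 ^ j * x i - k i) with hf
    have hzero : ∀ x, x ∉ Set.Icc a b → f x = 0 := by
      intro x hx
      have : (fun i => 2 ^ j * x i - (k i : ℝ)) ∉ Set.Icc (0 : Fin d → ℝ) (fun _ => S) := by
        intro hmem
        apply hx
        rw [Set.mem_Icc] at hmem ⊢
        obtain ⟨h1, h2⟩ := hmem
        constructor <;> intro i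
        · have := h1 i
          simp only [Pi.zero_apply] at this
          rw [ha]
          rw [div_le_iff₀ h2jpos]
          linarith
        · have h2i := h2 i
          simp only at h2i
          simp only [hb]
          rw [le_div_iff₀ h2jpos]
          linarith
      simp [hf, hsupp e _ this]
    have hint : (∫ x : Fin d → ℝ, f x) = ∫ x in Set.Icc a b, f x :=
      (setIntegral_eq_integral_of_forall_compl_eq_zero hzero).symm
    have hvol : volume (Set.Icc a b) < ⊤ := by
      rw [Real.volume_Icc_pi]
      exact ENNReal.prod_lt_top fun i _ => ENNReal.ofReal_lt_top
    have hvolR : (volume (Set.Icc a b)).toReal = (S / 2 ^ j) ^ d := by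
      rw [Real.volume_Icc_pi_toReal hab]
      have : ∀ i : Fin d, b i - a i = S / 2 ^ j := by
        intro i; simp only [ha, hb]; ring
      rw [Finset.prod_congr rfl fun i _ => this i, Finset.prod_const]
      simp
    have hA : (0 : ℝ) < (2 : ℝ) ^ ((j : ℝ) * d / 2) := by positivity
    have hbound : ‖∫ x in Set.Icc a b, f x‖
        ≤ C * ((2 : ℝ) ^ ((j : ℝ) * d / 2) * M) * (volume (Set.Icc a b)).toReal := by
      apply norm_setIntegral_le_of_norm_le_const_ae' hvol
      filter_upwards [hae] with x hx _
      rw [hf]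
      simp only [norm_mul, Real.norm_eq_abs]
      have h1 : |(2 : ℝ) ^ ((j : ℝ) * d / 2)| = (2 : ℝ) ^ ((j : ℝ) * d / 2) :=
        abs_of_pos hA
      rw [h1]
      have h2 : |ψ e fun i => 2 ^ j * x i - (k i : ℝ)| ≤ M := hbd e _
      have h3 : |h x| ≤ C := by rwa [Real.norm_eq_abs] at hx
      have := mul_le_mul h3 (mul_le_mul_of_nonneg_left h2 hA.le) (by positivity) hC0
      simpa [Real.norm_eq_abs] using this
    -- exponent arithmetic
    have hJle : Real.logb 2 n / d ≤ (j : ℝ) := by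
      have h1 : Real.logb 2 n / d ≤ (⌈Real.logb 2 n / d⌉₊ : ℝ) := Nat.le_ceil _
      have h2 : ((⌈Real.logb 2 n / d⌉₊ : ℕ) : ℝ) ≤ (j : ℝ) := by
        exact_mod_cast hj.le
      linarith
    have hdpos : (0 : ℝ) < (d : ℝ) := by exact_mod_cast hd
    have hlogle : Real.logb 2 n ≤ (j : ℝ) * d := by
      rw [div_le_iff₀ hdpos] at hJle
      linarith
    have hn2 : (n : ℝ) ≤ (2 : ℝ) ^ ((j : ℝ) * d) := by
      have : (n : ℝ) = (2 : ℝ) ^ (Real.logb 2 n) :=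
        (Real.rpow_logb (by norm_num) (by norm_num) hnpos).symm
      rw [this]
      exact Real.rpow_le_rpow_of_exponent_le one_le_two hlogle
    have hkey : (2 : ℝ) ^ (-((j : ℝ) * d) / 2) ≤ (n : ℝ) ^ (-(1 : ℝ) / 2) := by
      have heq : (2 : ℝ) ^ (-((j : ℝ) * d) / 2)
          = ((2 : ℝ) ^ ((j : ℝ) * d)) ^ (-(1 : ℝ) / 2) := by
        rw [← Real.rpow_mul (by norm_num : (0:ℝ) ≤ 2)]
        congr 1
        ring
      rw [heq]
      exact Real.rpow_le_rpow_of_nonpos hnpos hn2 (by norm_num)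
    have hrpow1 : (2 : ℝ) ^ (-(j : ℝ) * β) ≤ 1 :=
      Real.rpow_le_one_of_one_le_of_nonpos one_le_two
        (by nlinarith [Nat.cast_nonneg (α := ℝ) j])
    -- combine
    have habs : |∫ x : Fin d → ℝ,
        h x * ((2 : ℝ) ^ ((j : ℝ) * d / 2) * ψ e fun i => 2 ^ j * x i - k i)|
        ≤ C * ((2 : ℝ) ^ ((j : ℝ) * d / 2) * M) * (S / 2 ^ j) ^ d := by
      rw [← hf] at *
      calc |∫ x, f x| = ‖∫ x in Set.Icc a b, f x‖ := by rw [hint, Real.norm_eq_abs]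
        _ ≤ C * ((2 : ℝ) ^ ((j : ℝ) * d / 2) * M) * (volume (Set.Icc a b)).toReal := hbound
        _ = C * ((2 : ℝ) ^ ((j : ℝ) * d / 2) * M) * (S / 2 ^ j) ^ d := by rw [hvolR]
    have hsimp : (2 : ℝ) ^ ((j : ℝ) * d / 2) * (S / 2 ^ j) ^ d
        = S ^ d * (2 : ℝ) ^ (-((j : ℝ) * d) / 2) := by
      rw [div_pow]
      have h1 : ((2 : ℝ) ^ j) ^ d = (2 : ℝ) ^ ((j : ℝ) * d) := by
        rw [← pow_mul, ← Real.rpow_natCast 2 (j * d)]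
        push_cast; ring_nf
      have h2 : (2:ℝ) ^ ((j:ℝ)*d/2) / (2:ℝ) ^ ((j:ℝ)*d) = (2:ℝ) ^ (-((j:ℝ)*d)/2) := by
        rw [← Real.rpow_sub (by norm_num : (0:ℝ) < 2)]
        congr 1
        ring
      rw [h1, mul_comm, div_mul_eq_mul_div, mul_div_assoc, h2]
    have hfinal : (2 : ℝ) ^ (-(j : ℝ) * β) *
        |∫ x : Fin d → ℝ,
            h x * ((2 : ℝ) ^ ((j : ℝ) * d / 2) * ψ e fun i => 2 ^ j * x i - k i)|
        ≤ S ^ d * M * C * (n : ℝ) ^ (-(1 : ℝ) / 2) := by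
      calc (2 : ℝ) ^ (-(j : ℝ) * β) * |_| ≤ 1 * (C * ((2 : ℝ) ^ ((j : ℝ) * d / 2) * M) * (S / 2 ^ j) ^ d) :=
            mul_le_mul hrpow1 habs (abs_nonneg _) (by norm_num)
        _ = S ^ d * M * C * (2 : ℝ) ^ (-((j : ℝ) * d) / 2) := by
            rw [one_mul]; linear_combination (C * M) * hsimp
        _ ≤ S ^ d * M * C * (n : ℝ) ^ (-(1 : ℝ) / 2) := by
            apply mul_le_mul_of_nonneg_left hkey (by positivity)
    linarith
end

section
/- Let S ≥ 1 and M > 0 be reals and let ψ : ℝ → ℝ be measurable with |ψ(x)| ≤ M for all x, ψ(x) = 0 for x ∉ [0,S], and ∫_ℝ ψ(x) dx = 0. Let g : ℝ → ℝ be a function of bounded variation on ℝ with total variation V, such that g(x) = 0 for x ∉ [0,1]. Then for every j ∈ ℕ: Σ_{k ∈ ℤ} | ∫_ℝ g(x) · 2^{j/2} ψ(2^j x − k) dx | ≤ (S + 1) · S · M · 2^{−j/2} · V. -/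
open MeasureTheory
open scoped ENNReal

/-- Telescoping: variation over `[u m, u (m+n)]` is the sum of variations over
consecutive pieces, for a monotone `u : ℤ → ℝ`. -/
lemma evar_telescope (g : ℝ → ℝ) (u : ℤ → ℝ) (hu : Monotone u) (m : ℤ) (n : ℕ) :
    eVariationOn g (Set.Icc (u m) (u (m + n)))
      = ∑ i ∈ Finset.range n, eVariationOn g (Set.Icc (u (m + i)) (u (m + i + 1))) := by
  induction n with
  | zero =>
      simp only [Nat.cast_zero, add_zero, Finset.range_zero, Finset.sum_empty]
      exact eVariationOn.subsingleton g (by simp [Set.Icc_self, Set.subsingleton_singleton])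
  | succ n ih =>
      have h1 : m ≤ m + (n : ℤ) := by omega
      have h2 : m + (n : ℤ) ≤ m + (n : ℤ) + 1 := by omega
      have h := eVariationOn.Icc_add_Icc g (s := Set.univ) (hu h1) (hu h2) (Set.mem_univ _)
      simp only [Set.univ_inter] at h
      have hcast : m + ((n : ℕ) + 1 : ℕ) = m + (n : ℤ) + 1 := by push_cast; ring
      rw [hcast, ← h, Finset.sum_range_succ, ← ih]

/-- Per-coefficient bound: the wavelet coefficient at scale `t`, shift `k`, is bounded by
`c·M·(S/t)` times the variation of `g` on the support interval. -/
lemma coeff_bound (S M : ℝ) (hS : 1 ≤ S) (hM : 0 < M)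
    (ψ : ℝ → ℝ) (hmeas : Measurable ψ)
    (hbd : ∀ x, |ψ x| ≤ M)
    (hsupp : ∀ x, x ∉ Set.Icc (0 : ℝ) S → ψ x = 0)
    (hmoment : ∫ x, ψ x = 0)
    (g : ℝ → ℝ) (hgmeas : Measurable g)
    (C : ℝ) (hgbd : ∀ x, |g x| ≤ C)
    (hfin : eVariationOn g Set.univ ≠ ⊤)
    (t c : ℝ) (ht : 0 < t) (hc : 0 < c) (k : ℤ) :
    |∫ x, g x * (c * ψ (t * x - k))|
      ≤ c * M * (S / t) *
        (eVariationOn g (Set.Icc ((k : ℝ) / t) (((k : ℝ) + S) / t))).toReal := by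
  set a : ℝ := (k : ℝ) / t with ha
  set b : ℝ := ((k : ℝ) + S) / t with hb
  have hab : a ≤ b := by
    rw [ha, hb]
    exact div_le_div_of_nonneg_right (by linarith) ht.le
  set h : ℝ → ℝ := fun x => c * ψ (t * x - k) with hh
  have hmem : ∀ x : ℝ, x ∉ Set.Icc a b → h x = 0 := by
    intro x hx
    have : t * x - (k : ℝ) ∉ Set.Icc (0 : ℝ) S := by
      intro hmem
      apply hx
      obtain ⟨h1, h2⟩ := hmem
      constructor
      · rw [ha, div_le_iff₀ ht]; linarith [mul_comm t x]
      · rw [hb, le_div_iff₀ ht]; linarith [mul_comm t x]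
    simp [hh, hsupp _ this]
  have hhm : Measurable h := by
    apply Measurable.const_mul
    exact hmeas.comp ((measurable_const.mul measurable_id).sub measurable_const)
  have hhbd : ∀ x, |h x| ≤ c * M := by
    intro x
    rw [hh, abs_mul, abs_of_pos hc]
    exact mul_le_mul_of_nonneg_left (hbd _) hc.le
  -- integrability of h and g * h
  have hIccvol : volume (Set.Icc a b) ≠ ∞ := by
    rw [Real.volume_Icc]; exact ENNReal.ofReal_ne_top
  have hint_of_bdd : ∀ (F : ℝ → ℝ), Measurable F → (∀ x, x ∉ Set.Icc a b → F x = 0) →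
      (∀ x, |F x| ≤ c * M * (C + 1)) → Integrable F := by
    intro F hFm hF0 hFbd
    have hind : F = Set.indicator (Set.Icc a b) F := by
      funext x
      by_cases hx : x ∈ Set.Icc a b
      · rw [Set.indicator_of_mem hx]
      · rw [Set.indicator_of_notMem hx, hF0 x hx]
    rw [hind]
    rw [integrable_indicator_iff measurableSet_Icc]
    apply Measure.integrableOn_of_bounded hIccvol hFm.aestronglyMeasurable
    filter_upwards with x
    exact (hFbd x).trans (le_abs_self _) |>.trans (le_abs_self _)
  have hC0 : 0 ≤ C := le_trans (abs_nonneg _) (hgbd 0)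
  have hcM : 0 < c * M := mul_pos hc hM
  have hint_h : Integrable h := by
    apply hint_of_bdd h hhm hmem
    intro x
    have := hhbd x
    nlinarith
  have hint_G : Integrable (fun x => g x * h x) := by
    apply hint_of_bdd _ (hgmeas.mul hhm) (fun x hx => by rw [Pi.mul_apply, hmem x hx, mul_zero])
    intro x
    rw [Pi.mul_apply, abs_mul]
    calc |g x| * |h x| ≤ C * (c * M) :=
          mul_le_mul (hgbd x) (hhbd x) (abs_nonneg _) hC0
      _ ≤ c * M * (C + 1) := by nlinarith
  -- vanishing mean of h
  have hψ0 : ∫ x, ψ (t * x - k) = 0 := by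
    have hrw : ∀ x : ℝ, t * x - (k : ℝ) = t * (x - (k : ℝ) / t) := by
      intro x; field_simp
    calc ∫ x, ψ (t * x - k) = ∫ x, (fun y => ψ (t * y)) (x - (k : ℝ) / t) := by
          simp_rw [hrw]
      _ = ∫ y, ψ (t * y) := integral_sub_right_eq_self (fun y => ψ (t * y)) _
      _ = |t⁻¹| • ∫ y, ψ y := MeasureTheory.Measure.integral_comp_mul_left ψ t
      _ = 0 := by rw [hmoment, smul_zero]
  have hh0 : ∫ x, h x = 0 := by
    rw [hh]
    rw [integral_const_mul, hψ0, mul_zero]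
  -- subtract constant g a
  have hsub : ∫ x, g x * h x = ∫ x, (g x - g a) * h x := by
    have : (fun x => (g x - g a) * h x) = fun x => g x * h x - g a * h x := by
      funext x; ring
    rw [this, integral_sub hint_G (hint_h.const_mul (g a)), integral_const_mul, hh0,
      mul_zero, sub_zero]
  -- the variation bound
  set D : ℝ := (eVariationOn g (Set.Icc a b)).toReal with hD
  have hvar_fin : eVariationOn g (Set.Icc a b) ≠ ⊤ :=
    fun hcon => hfin (top_le_iff.mp (hcon ▸ eVariationOn.mono g (Set.subset_univ _)))
  have hD0 : 0 ≤ D := ENNReal.toReal_nonneg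
  have hptwise : ∀ x, |(g x - g a) * h x|
      ≤ Set.indicator (Set.Icc a b) (fun _ => D * (c * M)) x := by
    intro x
    by_cases hx : x ∈ Set.Icc a b
    · rw [Set.indicator_of_mem hx, abs_mul]
      have hga : |g x - g a| ≤ D := by
        have he := eVariationOn.edist_le g hx (Set.left_mem_Icc.mpr hab)
        have := ENNReal.toReal_mono hvar_fin he
        rwa [← dist_edist, Real.dist_eq] at this
      exact mul_le_mul hga (hhbd x) (abs_nonneg _) hD0
    · rw [Set.indicator_of_notMem hx, hmem x hx, mul_zero, abs_zero]
  have hint_sub : Integrable (fun x => (g x - g a) * h x) := by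
    have : (fun x => (g x - g a) * h x) = fun x => g x * h x - g a * h x := by
      funext x; ring
    rw [this]; exact hint_G.sub (hint_h.const_mul (g a))
  have hind_int : Integrable (Set.indicator (Set.Icc a b) (fun _ : ℝ => D * (c * M))) := by
    rw [integrable_indicator_iff measurableSet_Icc]
    exact (integrableOn_const_iff).mpr (Or.inr (lt_top_iff_ne_top.mpr hIccvol))
  have hstart : (∫ x, g x * (c * ψ (t * x - (k : ℝ)))) = ∫ x, g x * h x := by
    simp only [hh]
  calc |∫ x, g x * (c * ψ (t * x - k))| = |∫ x, (g x - g a) * h x| := by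
        rw [hstart, hsub]
    _ ≤ ∫ x, |(g x - g a) * h x| := by
        simpa only [Real.norm_eq_abs] using
          norm_integral_le_integral_norm (μ := volume) (fun x => (g x - g a) * h x)
    _ ≤ ∫ x, Set.indicator (Set.Icc a b) (fun _ => D * (c * M)) x :=
        integral_mono hint_sub.abs hind_int hptwise
    _ = D * (c * M) * (volume (Set.Icc a b)).toReal := by
        rw [integral_indicator_const _ measurableSet_Icc, smul_eq_mul, measureReal_def, mul_comm]
    _ = D * (c * M) * (b - a) := by
        rw [Real.volume_Icc, ENNReal.toReal_ofReal (by linarith)]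
    _ = c * M * (S / t) * D := by
        have : b - a = S / t := by rw [hb, ha]; field_simp; ring
        rw [this]; ring

/-- ℓ¹ wavelet-coefficient bound for `BV` functions in dimension 1 (used in the proof of
Proposition 8 of the paper, reflecting `BV ⊂ B¹_{1,∞}`): if `ψ` is bounded by `M`,
supported in `[0,S]` with vanishing mean, and `g` vanishes outside `[0,1]` and has total
variation `V` on `ℝ`, then for every scale `j`,
`Σ_{k ∈ ℤ} |∫ g(x) 2^{j/2} ψ(2^j x - k) dx| ≤ (S+1) S M 2^{-j/2} V`. -/
theorem bv_wavelet_coefficient_l1_bound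
    (S M : ℝ) (hS : 1 ≤ S) (hM : 0 < M)
    (ψ : ℝ → ℝ) (hmeas : Measurable ψ)
    (hbd : ∀ x, |ψ x| ≤ M)
    (hsupp : ∀ x, x ∉ Set.Icc (0 : ℝ) S → ψ x = 0)
    (hmoment : ∫ x, ψ x = 0)
    (g : ℝ → ℝ) (V : ℝ) (hV0 : 0 ≤ V)
    (hgsupp : ∀ x, x ∉ Set.Icc (0 : ℝ) 1 → g x = 0)
    (hgBV : eVariationOn g Set.univ = ENNReal.ofReal V) :
    ∀ j : ℕ,
      ∑' k : ℤ, ENNReal.ofReal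
          |∫ x, g x * ((2 : ℝ) ^ ((j : ℝ) / 2) * ψ (2 ^ j * x - k))|
        ≤ ENNReal.ofReal ((S + 1) * S * M * (2 : ℝ) ^ (-(j : ℝ) / 2) * V) := by
  intro j
  have hS0 : 0 < S := lt_of_lt_of_le one_pos hS
  set t : ℝ := (2 : ℝ) ^ j with htdef
  set c : ℝ := (2 : ℝ) ^ ((j : ℝ) / 2) with hcdef
  have ht : 0 < t := by positivity
  have hc : 0 < c := Real.rpow_pos_of_pos two_pos _
  -- measurability of g
  have hfin : eVariationOn g Set.univ ≠ ⊤ := by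
    rw [hgBV]; exact ENNReal.ofReal_ne_top
  have hgmeas : Measurable g := by
    have hbv : LocallyBoundedVariationOn g Set.univ :=
      BoundedVariationOn.locallyBoundedVariationOn (by rw [BoundedVariationOn, hgBV]; exact ENNReal.ofReal_ne_top)
    obtain ⟨p, q, hp, hq, hpq⟩ := hbv.exists_monotoneOn_sub_monotoneOn
    rw [hpq]
    exact ((monotoneOn_univ.mp hp).measurable).sub ((monotoneOn_univ.mp hq).measurable)
  -- boundedness of g
  have hgbd : ∀ x, |g x| ≤ V := by
    intro x
    have h2 : g 2 = 0 := hgsupp 2 (by norm_num)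
    have he := eVariationOn.edist_le g (Set.mem_univ x) (Set.mem_univ (2 : ℝ))
    have := ENNReal.toReal_mono hfin he
    rw [← dist_edist, Real.dist_eq, h2, sub_zero, hgBV, ENNReal.toReal_ofReal hV0] at this
    exact this
  set N : ℕ := ⌈S⌉₊ with hNdef
  have hSN : S ≤ (N : ℝ) := Nat.le_ceil S
  have hN1 : (N : ℝ) ≤ S + 1 := le_of_lt (Nat.ceil_lt_add_one hS0.le)
  set L : ℕ := 2 ^ j + N + 1 with hLdef
  set emb : ℕ ↪ ℤ := ⟨fun i => (i : ℤ) - N, fun i i' hii => by simpa using hii⟩ with hemb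
  set K : Finset ℤ := (Finset.range L).map emb with hK
  set u : ℤ → ℝ := fun m => (m : ℝ) / t with hu
  have humono : Monotone u := by
    intro m m' hmm
    exact div_le_div_of_nonneg_right (by exact_mod_cast hmm) ht.le
  -- summand vanishes off K
  have hvanish : ∀ k : ℤ, k ∉ K →
      ENNReal.ofReal |∫ x, g x * (c * ψ (t * x - k))| = 0 := by
    intro k hk
    have hrange : ¬(-(N : ℤ) ≤ k ∧ k ≤ 2 ^ j) := by
      intro ⟨h1, h2⟩
      apply hk
      rw [hK, Finset.mem_map]
      have hcast : ((2 ^ j : ℕ) : ℤ) = 2 ^ j := by push_cast; ring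
      refine ⟨(k + N).toNat, ?_, ?_⟩
      · rw [Finset.mem_range, hLdef]; omega
      · show ((k + N).toNat : ℤ) - N = k; omega
    have hzero : ∀ x, g x * (c * ψ (t * x - k)) = 0 := by
      intro x
      by_cases hgx : g x = 0
      · rw [hgx, zero_mul]
      have hx01 : x ∈ Set.Icc (0 : ℝ) 1 := by
        by_contra hcon; exact hgx (hgsupp x hcon)
      by_cases hψx : ψ (t * x - k) = 0
      · rw [hψx, mul_zero, mul_zero]
      have hxS : t * x - (k : ℝ) ∈ Set.Icc (0 : ℝ) S := by
        by_contra hcon; exact hψx (hsupp _ hcon)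
      exfalso
      apply hrange
      obtain ⟨hx0, hx1⟩ := hx01
      obtain ⟨hy0, hyS⟩ := hxS
      constructor
      · have : (-(N : ℝ)) ≤ (k : ℝ) := by nlinarith
        exact_mod_cast this
      · have htx : t * x ≤ t := by nlinarith
        have : (k : ℝ) ≤ ((2 ^ j : ℤ) : ℝ) := by push_cast; nlinarith
        exact_mod_cast this
    rw [show (∫ x, g x * (c * ψ (t * x - k))) = 0 by simp [hzero], abs_zero,
      ENNReal.ofReal_zero]
  have htsum : (∑' k : ℤ, ENNReal.ofReal |∫ x, g x * (c * ψ (t * x - k))|)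
      = ∑ k ∈ K, ENNReal.ofReal |∫ x, g x * (c * ψ (t * x - k))| :=
    tsum_eq_sum (fun k hk => hvanish k hk)
  -- per-k bound in ℝ≥0∞
  set A : ℝ≥0∞ := ENNReal.ofReal (c * M * (S / t)) with hA
  have hperk : ∀ k : ℤ, ENNReal.ofReal |∫ x, g x * (c * ψ (t * x - k))|
      ≤ A * eVariationOn g (Set.Icc (u k) (u k + S / t)) := by
    intro k
    have hiccrw : u k + S / t = ((k : ℝ) + S) / t := by
      rw [hu]; field_simp
    rw [hiccrw]
    have hvfin : eVariationOn g (Set.Icc ((k : ℝ) / t) (((k : ℝ) + S) / t)) ≠ ⊤ :=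
      fun hcon => hfin (top_le_iff.mp (hcon ▸ eVariationOn.mono g (Set.subset_univ _)))
    have hcb := coeff_bound S M hS hM ψ hmeas hbd hsupp hmoment g hgmeas V hgbd hfin
      t c ht hc k
    calc ENNReal.ofReal |∫ x, g x * (c * ψ (t * x - k))|
        ≤ ENNReal.ofReal (c * M * (S / t) *
            (eVariationOn g (Set.Icc ((k : ℝ) / t) (((k : ℝ) + S) / t))).toReal) :=
          ENNReal.ofReal_le_ofReal hcb
      _ = A * eVariationOn g (Set.Icc ((k : ℝ) / t) (((k : ℝ) + S) / t)) := by
          rw [hA, ENNReal.ofReal_mul (by positivity), ENNReal.ofReal_toReal hvfin]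
  -- variation over the support interval is at most a sum of N dyadic pieces
  have hvar_pieces : ∀ k : ℤ, eVariationOn g (Set.Icc (u k) (u k + S / t))
      ≤ ∑ i ∈ Finset.range N, eVariationOn g (Set.Icc (u (k + i)) (u (k + i + 1))) := by
    intro k
    rw [← evar_telescope g u humono k N]
    apply eVariationOn.mono
    apply Set.Icc_subset_Icc le_rfl
    have huk : u (k + N) = ((k : ℝ) + N) / t := by simp only [hu]; push_cast; ring_nf
    have huks : u k + S / t = ((k : ℝ) + S) / t := by simp only [hu]; field_simp
    rw [huk, huks]
    exact div_le_div_of_nonneg_right (by linarith) ht.le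
  -- sums of consecutive dyadic variations are at most total variation
  have hrow : ∀ i : ℕ, (∑ i' ∈ Finset.range L,
      eVariationOn g (Set.Icc (u (((i' : ℤ) - N) + i)) (u (((i' : ℤ) - N) + i + 1))))
      ≤ ENNReal.ofReal V := by
    intro i
    have hshift : ∀ i' : ℕ, ((i' : ℤ) - N) + i = ((i : ℤ) - N) + i' := by intro i'; ring
    calc (∑ i' ∈ Finset.range L,
          eVariationOn g (Set.Icc (u (((i' : ℤ) - N) + i)) (u (((i' : ℤ) - N) + i + 1))))
        = ∑ i' ∈ Finset.range L,
          eVariationOn g (Set.Icc (u (((i : ℤ) - N) + i')) (u (((i : ℤ) - N) + i' + 1))) := by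
          apply Finset.sum_congr rfl
          intro i' _
          rw [hshift i']
      _ = eVariationOn g (Set.Icc (u ((i : ℤ) - N)) (u ((i : ℤ) - N + L))) :=
          (evar_telescope g u humono ((i : ℤ) - N) L).symm
      _ ≤ eVariationOn g Set.univ := eVariationOn.mono g (Set.subset_univ _)
      _ = ENNReal.ofReal V := hgBV
  -- combine
  have hmain : (∑' k : ℤ, ENNReal.ofReal |∫ x, g x * (c * ψ (t * x - k))|)
      ≤ A * (N * ENNReal.ofReal V) := by
    rw [htsum]
    calc (∑ k ∈ K, ENNReal.ofReal |∫ x, g x * (c * ψ (t * x - k))|)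
        ≤ ∑ k ∈ K, A * eVariationOn g (Set.Icc (u k) (u k + S / t)) :=
          Finset.sum_le_sum (fun k _ => hperk k)
      _ = A * ∑ k ∈ K, eVariationOn g (Set.Icc (u k) (u k + S / t)) := by
          rw [Finset.mul_sum]
      _ ≤ A * ∑ k ∈ K, ∑ i ∈ Finset.range N,
            eVariationOn g (Set.Icc (u (k + i)) (u (k + i + 1))) := by
          exact mul_le_mul_right (Finset.sum_le_sum (fun k _ => hvar_pieces k)) A
      _ = A * ∑ i' ∈ Finset.range L, ∑ i ∈ Finset.range N,
            eVariationOn g (Set.Icc (u (((i' : ℤ) - N) + i)) (u (((i' : ℤ) - N) + i + 1))) := by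
          rw [hK, Finset.sum_map]
          rfl
      _ = A * ∑ i ∈ Finset.range N, ∑ i' ∈ Finset.range L,
            eVariationOn g (Set.Icc (u (((i' : ℤ) - N) + i)) (u (((i' : ℤ) - N) + i + 1))) := by
          rw [Finset.sum_comm]
      _ ≤ A * ∑ _i ∈ Finset.range N, ENNReal.ofReal V :=
          mul_le_mul_right (Finset.sum_le_sum (fun i _ => hrow i)) A
      _ = A * (N * ENNReal.ofReal V) := by
          rw [Finset.sum_const, Finset.card_range, nsmul_eq_mul]
  -- final numeric comparison
  have hct : c * M * (S / t) * (N * V) ≤ (S + 1) * S * M * (2 : ℝ) ^ (-(j : ℝ) / 2) * V := by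
    have hctpow : c / t = (2 : ℝ) ^ (-(j : ℝ) / 2) := by
      rw [hcdef, htdef, ← Real.rpow_natCast 2 j, ← Real.rpow_sub two_pos]
      congr 1
      ring
    have h1 : c * M * (S / t) * ((N : ℝ) * V) = (N : ℝ) * S * M * (c / t) * V := by
      field_simp
    rw [h1, hctpow]
    have hp : (0 : ℝ) < (2 : ℝ) ^ (-(j : ℝ) / 2) := Real.rpow_pos_of_pos two_pos _
    have : (N : ℝ) * S * M * (2 : ℝ) ^ (-(j : ℝ) / 2)
        ≤ (S + 1) * S * M * (2 : ℝ) ^ (-(j : ℝ) / 2) := by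
      apply mul_le_mul_of_nonneg_right ?_ hp.le
      exact mul_le_mul_of_nonneg_right (mul_le_mul_of_nonneg_right hN1 hS0.le) hM.le
    exact mul_le_mul_of_nonneg_right this hV0
  have hfinal : A * (N * ENNReal.ofReal V)
      ≤ ENNReal.ofReal ((S + 1) * S * M * (2 : ℝ) ^ (-(j : ℝ) / 2) * V) := by
    have hNV : (N : ℝ≥0∞) * ENNReal.ofReal V = ENNReal.ofReal (N * V) := by
      rw [ENNReal.ofReal_mul (by positivity), ENNReal.ofReal_natCast]
    rw [hNV, hA, ← ENNReal.ofReal_mul (by positivity)]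
    exact ENNReal.ofReal_le_ofReal hct
  exact le_trans (le_of_eq (by rfl)) (hmain.trans hfinal)
end
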